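/- For every k ≥ 2, the digraph D⃗_{2k+1} is not α-diperfect: {x_0, x_{2k}} is a maximum stable set of D⃗_{2k+1} for which no path partition of D⃗_{2k+1} is orthogonal to it. -/

import Mathlib

/-- A directed path in a digraph with arc relation `A`: a nonempty list of distinct
vertices each of which dominates the next. -/
def IsDipath {V : Type*} (A : V → V → Prop) (p : List V) : Prop :=
  p ≠ [] ∧ p.Nodup ∧ p.Chain' A

/-- A path partition of the digraph `(V, A)`: a collection of vertex-disjoint directed
paths covering all of `V`. -/
def IsPathPartition {V : Type*} (A : V → V → Prop) (P : Set (List V)) : Prop :=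
  (∀ p ∈ P, IsDipath A p) ∧
  (∀ p ∈ P, ∀ q ∈ P, p ≠ q → ∀ v : V, v ∈ p → v ∉ q) ∧
  (∀ v : V, ∃ p ∈ P, v ∈ p)

/-- A path partition `P` and a stable set `S` are orthogonal if every path of `P`
contains exactly one vertex of `S`. -/
def OrthogonalPP {V : Type*} (P : Set (List V)) (S : Set V) : Prop :=
  ∀ p ∈ P, ∃! v : V, v ∈ S ∧ v ∈ p

/-- A directed path of the subdigraph induced by the vertex set `W`. -/
def IsDipathOn {V : Type*} (A : V → V → Prop) (W : Set V) (p : List V) : Prop :=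
  p ≠ [] ∧ p.Nodup ∧ (∀ v ∈ p, v ∈ W) ∧ p.Chain' A

/-- A path partition of the subdigraph induced by the vertex set `W`. -/
def IsPathPartitionOn {V : Type*} (A : V → V → Prop) (W : Set V) (P : Set (List V)) : Prop :=
  (∀ p ∈ P, IsDipathOn A W p) ∧
  (∀ p ∈ P, ∀ q ∈ P, p ≠ q → ∀ v : V, v ∈ p → v ∉ q) ∧
  (∀ v ∈ W, ∃ p ∈ P, v ∈ p)

/-- A stable set: a set of pairwise non-adjacent vertices. -/
def IsStableSet {V : Type*} (A : V → V → Prop) (S : Set V) : Prop :=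
  ∀ u ∈ S, ∀ v ∈ S, u ≠ v → ¬ A u v ∧ ¬ A v u

/-- A digraph is α-diperfect if for every induced subdigraph (on a vertex set `W`) and
every maximum stable set `S` of it, there is a path partition of it orthogonal to `S`. -/
def AlphaDiperfect {V : Type*} (A : V → V → Prop) : Prop :=
  ∀ (W S : Set V), S ⊆ W → IsStableSet A S →
    (∀ T ⊆ W, IsStableSet A T → T.ncard ≤ S.ncard) →
    ∃ P : Set (List V), IsPathPartitionOn A W P ∧ OrthogonalPP P S

/-- The arc relation of the digraph `D⃗_{2k+1}` on vertices `x_0, …, x_{2k}`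
(realized as `ZMod (2*k+1)`): the arcs are exactly the pairs `(x_i, x_j)` with
`0 ≤ i < j ≤ 2k`, `j - i ≥ 2` and `(i, j) ≠ (0, 2k)`. -/
def DvecArc (k : ℕ) (u v : ZMod (2*k+1)) : Prop :=
  u.val + 2 ≤ v.val ∧ ¬(u.val = 0 ∧ v.val = 2*k)

lemma dvec_chain_last {k : ℕ} :
    ∀ (p : List (ZMod (2*k+1))) (a : ZMod (2*k+1)), List.Chain (DvecArc k) a p →
      a.val + 2 * p.length ≤ ((a::p).getLast (List.cons_ne_nil a p)).val := by
  intro p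
  induction p with
  | nil => intro a _; simp
  | cons b t ih =>
    intro a h
    rw [List.Chain, List.chain_cons] at h
    have h1 := h.1.1
    have h2 := ih b h.2
    rw [List.getLast_cons_cons]
    simp only [List.length_cons] at *
    omega

lemma dvec_chain_head_le {k : ℕ} :
    ∀ (p : List (ZMod (2*k+1))) (a v : ZMod (2*k+1)), List.Chain (DvecArc k) a p →
      v ∈ a :: p → a.val ≤ v.val := by
  intro p
  induction p with
  | nil => intro a v _ hv; simp at hv; simp [hv]
  | cons b t ih =>
    intro a v h hv
    rw [List.Chain, List.chain_cons] at h
    rcases List.mem_cons.1 hv with rfl | hv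
    · exact le_refl _
    · have h1 := h.1.1
      exact le_trans (by omega : a.val ≤ b.val) (ih b v h.2 hv)


/-- for `k ≥ 2`, `D⃗_{2k+1}` is not α-diperfect: `{x_0, x_{2k}}` is a
maximum stable set admitting no orthogonal path partition. -/
theorem stmt_11 (k : ℕ) (hk : 2 ≤ k) :
    IsStableSet (DvecArc k)
      {((0 : ℕ) : ZMod (2*k+1)), ((2*k : ℕ) : ZMod (2*k+1))} ∧
    (∀ T : Set (ZMod (2*k+1)), IsStableSet (DvecArc k) T →
      T.ncard ≤ ({((0 : ℕ) : ZMod (2*k+1)), ((2*k : ℕ) : ZMod (2*k+1))} :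
        Set (ZMod (2*k+1))).ncard) ∧
    (¬ ∃ P : Set (List (ZMod (2*k+1))), IsPathPartition (DvecArc k) P ∧
      OrthogonalPP P {((0 : ℕ) : ZMod (2*k+1)), ((2*k : ℕ) : ZMod (2*k+1))}) ∧
    ¬ AlphaDiperfect (DvecArc k) := by
  haveI : NeZero (2*k+1) := ⟨Nat.succ_ne_zero _⟩
  set z := ((0 : ℕ) : ZMod (2*k+1)) with hz
  set w := ((2*k : ℕ) : ZMod (2*k+1)) with hw
  have hzval : z.val = 0 := by simp [hz]
  have hwval : w.val = 2*k := ZMod.val_cast_of_lt (by omega)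
  have hzw : z ≠ w := by
    intro h
    have := congrArg ZMod.val h
    rw [hzval, hwval] at this
    omega
  -- Part 1: stability
  have stab : IsStableSet (DvecArc k) {z, w} := by
    intro u hu v hv huv
    simp only [Set.mem_insert_iff, Set.mem_singleton_iff] at hu hv
    rcases hu with rfl | rfl <;> rcases hv with rfl | rfl <;>
      first
      | exact absurd rfl huv
      | · constructor <;>
          · rintro ⟨a1, a2⟩
            rw [hzval, hwval] at *
            omega
  -- Part 2: maximality
  have maxi : ∀ T : Set (ZMod (2*k+1)), IsStableSet (DvecArc k) T →
      T.ncard ≤ ({z, w} : Set (ZMod (2*k+1))).ncard := by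
    intro T hT
    rw [Set.ncard_pair hzw]
    by_contra hcon
    push_neg at hcon
    rw [Set.two_lt_ncard (Set.toFinite T)] at hcon
    obtain ⟨a, ha, b, hb, c, hc, hab, hac, hbc⟩ := hcon
    have e1 := (hT a ha b hb hab).1
    have e2 := (hT a ha b hb hab).2
    have e3 := (hT a ha c hc hac).1
    have e4 := (hT a ha c hc hac).2
    have e5 := (hT b hb c hc hbc).1
    have e6 := (hT b hb c hc hbc).2
    simp only [DvecArc, not_and, not_not] at e1 e2 e3 e4 e5 e6
    have vab : a.val ≠ b.val := fun h => hab (ZMod.val_injective _ h)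
    have vac : a.val ≠ c.val := fun h => hac (ZMod.val_injective _ h)
    have vbc : b.val ≠ c.val := fun h => hbc (ZMod.val_injective _ h)
    have la := ZMod.val_lt a
    have lb := ZMod.val_lt b
    have lc := ZMod.val_lt c
    omega
  -- Part 3: no orthogonal path partition
  have nopart : ¬ ∃ P : Set (List (ZMod (2*k+1))), IsPathPartition (DvecArc k) P ∧
      OrthogonalPP P {z, w} := by
    rintro ⟨P, ⟨hpaths, hdisj, hcover⟩, horth⟩
    obtain ⟨p, hpP, hzp⟩ := hcover z
    obtain ⟨q, hqP, hwq⟩ := hcover w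
    have hwp : w ∉ p := by
      intro hwp
      obtain ⟨v, hv, huniq⟩ := horth p hpP
      have h1 := huniq z ⟨Set.mem_insert _ _, hzp⟩
      have h2 := huniq w ⟨Set.mem_insert_of_mem _ rfl, hwp⟩
      exact hzw (h1.trans h2.symm)
    have hzq : z ∉ q := by
      intro hzq
      obtain ⟨v, hv, huniq⟩ := horth q hqP
      have h1 := huniq z ⟨Set.mem_insert _ _, hzq⟩
      have h2 := huniq w ⟨Set.mem_insert_of_mem _ rfl, hwq⟩
      exact hzw (h1.trans h2.symm)
    have hcov2 : ∀ v : ZMod (2*k+1), v ∈ p ∨ v ∈ q := by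
      intro v
      obtain ⟨r, hrP, hvr⟩ := hcover v
      obtain ⟨s, ⟨hsS, hsr⟩, _⟩ := horth r hrP
      simp only [Set.mem_insert_iff, Set.mem_singleton_iff] at hsS
      rcases hsS with rfl | rfl
      · left
        by_cases hrne : r = p
        · exact hrne ▸ hvr
        · exact absurd hzp (hdisj r hrP p hpP hrne z hsr)
      · right
        by_cases hrne : r = q
        · exact hrne ▸ hvr
        · exact absurd hwq (hdisj r hrP q hqP hrne w hsr)
    obtain ⟨hpne, hpnd, hpch⟩ := hpaths p hpP
    obtain ⟨hqne, hqnd, hqch⟩ := hpaths q hqP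
    obtain ⟨a, p', rfl⟩ := List.exists_cons_of_ne_nil hpne
    obtain ⟨b, q', rfl⟩ := List.exists_cons_of_ne_nil hqne
    have hchp : List.Chain (DvecArc k) a p' := hpch
    have hchq : List.Chain (DvecArc k) b q' := hqch
    have haz : a.val = 0 := by
      have h1 := dvec_chain_head_le p' a z hchp hzp
      omega
    have hlast := dvec_chain_last p' a hchp
    have hlmem : (a::p').getLast (List.cons_ne_nil a p') ∈ a :: p' := List.getLast_mem _
    have hlval : ((a::p').getLast (List.cons_ne_nil a p')).val ≠ 2*k := by
      intro h
      apply hwp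
      have hlw : (a::p').getLast (List.cons_ne_nil a p') = w :=
        ZMod.val_injective _ (by rw [h, hwval])
      exact hlw ▸ hlmem
    have hllt : ((a::p').getLast (List.cons_ne_nil a p')).val < 2*k+1 := ZMod.val_lt _
    have hplen : p'.length + 1 ≤ k := by omega
    have hbval : b.val ≠ 0 := by
      intro h
      apply hzq
      have hbz : b = z := ZMod.val_injective _ (by rw [h, hzval])
      exact hbz ▸ List.mem_cons_self (a := b) (l := q')
    have hlast' := dvec_chain_last q' b hchq
    have hllt' : ((b::q').getLast (List.cons_ne_nil b q')).val < 2*k+1 := ZMod.val_lt _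
    have hqlen : q'.length + 1 ≤ k := by omega
    have h1 : (Finset.univ : Finset (ZMod (2*k+1))).card ≤
        ((a::p').toFinset ∪ (b::q').toFinset).card := by
      apply Finset.card_le_card
      intro v _
      simp only [Finset.mem_union, List.mem_toFinset]
      exact hcov2 v
    have h2 := Finset.card_union_le (a::p').toFinset (b::q').toFinset
    have h3 : (a::p').toFinset.card ≤ (a::p').length := List.toFinset_card_le _
    have h4 : (b::q').toFinset.card ≤ (b::q').length := List.toFinset_card_le _
    have h5 : (Finset.univ : Finset (ZMod (2*k+1))).card = 2*k+1 := by
      rw [Finset.card_univ, ZMod.card]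
    simp only [List.length_cons] at h3 h4
    omega
  refine ⟨stab, maxi, nopart, ?_⟩
  intro hdip
  obtain ⟨P, ⟨hP1, hP2, hP3⟩, horth⟩ :=
    hdip Set.univ {z, w} (Set.subset_univ _) stab (fun T _ hT => maxi T hT)
  exact nopart ⟨P, ⟨fun p hp => ⟨(hP1 p hp).1, (hP1 p hp).2.1, (hP1 p hp).2.2.2⟩,
    hP2, fun v => hP3 v (Set.mem_univ v)⟩, horth⟩
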